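/- Reverse bump comparison: under ratio bounds $\big(\iint_{Q^\ell\times P}\omega^{ps}\big)^{1/(ps)}\le C 2^{\ell(\alpha-n/s)\mu_\omega}\big(\iint_{Q\times P}\omega^{ps}\big)^{1/(ps)}$ and $\big(\iint_{Q^\ell\times P}\sigma^{-pr/(p-1)}\big)^{(p-1)/(pr)}\le C 2^{\ell(\alpha-n/r)\lambda_\sigma}\big(\iint_{Q\times P}\sigma^{-pr/(p-1)}\big)^{(p-1)/(pr)}$, with $\lambda_\omega+\lambda_\sigma\ge1$ and $\alpha\le n/r$, one obtains $\mathbf{A}_{pr}^{\alpha\beta}[Q^\ell\times P](\omega,\sigma)\le C'\,2^{\ell\gamma_\omega}\,\mathbf{A}_{ps}^{\alpha\beta}[Q\times P](\omega,\sigma)$ with $\gamma_\omega=(\mu_\omega-\lambda_\omega)(\alpha-n/r)+n(1/r-1/s)(\mu_\omega-1/p)$. -/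

import Mathlib

open MeasureTheory ENNReal Set

noncomputable section

abbrev En (n : ℕ) : Type := EuclideanSpace ℝ (Fin n)

/-- The cube in `ℝⁿ` with center `c` and half side-length `h`. -/
def cube {n : ℕ} (c : En n) (h : ℝ) : Set (En n) := {x | ∀ i, |x i - c i| ≤ h}

/-- The dyadic cone `Γ_ℓ(x,y) = {(u,v) : 2^{-ℓ} ≤ |x-u|/|y-v| < 2^{-ℓ+1}}`. -/
def cone {n m : ℕ} (ℓ : ℤ) (x : En n) (y : En m) : Set (En n × En m) :=
  {z | z.2 ≠ y ∧ (2:ℝ) ^ (-ℓ) ≤ ‖x - z.1‖ / ‖y - z.2‖ ∧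
        ‖x - z.1‖ / ‖y - z.2‖ < (2:ℝ) ^ (-ℓ + 1)}

/-- The strong fractional integral kernel `|x-u|^{α-n} |y-v|^{β-m}`. -/
def kern {n m : ℕ} (α β : ℝ) (x : En n) (y : En m) (z : En n × En m) : ℝ≥0∞ :=
  ENNReal.ofReal (‖x - z.1‖ ^ (α - (n:ℝ)) * ‖y - z.2‖ ^ (β - (m:ℝ)))

/-- The strong fractional integral `I_{αβ} f`. -/
def Iab {n m : ℕ} (α β : ℝ) (f : En n × En m → ℝ≥0∞) (x : En n) (y : En m) : ℝ≥0∞ :=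
  ∫⁻ z, f z * kern α β x y z

/-- The cone piece `Δ_ℓ I_{αβ} f`. -/
def DeltaI {n m : ℕ} (α β : ℝ) (ℓ : ℤ) (f : En n × En m → ℝ≥0∞) (x : En n) (y : En m) : ℝ≥0∞ :=
  ∫⁻ z in cone ℓ x y, f z * kern α β x y z

/-- The one-parameter fractional integral of order `α+β` on `ℝ^{n+m}`. -/
def Ione {n m : ℕ} (α β : ℝ) (g : En n × En m → ℝ≥0∞) (x : En n) (y : En m) : ℝ≥0∞ :=
  ∫⁻ z, g z * ENNReal.ofReal ((‖x - z.1‖ ^ 2 + ‖y - z.2‖ ^ 2) ^ ((α + β - (n:ℝ) - (m:ℝ)) / 2))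

/-- `B_{pr}[R](ω,σ)`. -/
def Bloc {n m : ℕ} (p r : ℝ) (ω σ : En n × En m → ℝ≥0∞) (R : Set (En n × En m)) : ℝ≥0∞ :=
  (∫⁻ z in R, ω z ^ (p * r)) ^ (1 / (p * r)) *
  (∫⁻ z in R, (σ z)⁻¹ ^ (p * r / (p - 1))) ^ ((p - 1) / (p * r))

/-- `A_{pr}^{αβ}[Q × P](ω,σ)`. -/
def Aloc (n m : ℕ) (α β p r : ℝ) (ω σ : En n × En m → ℝ≥0∞)
    (Q : Set (En n)) (P : Set (En m)) : ℝ≥0∞ :=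
  volume Q ^ (α / n - 1 / r) * volume P ^ (β / m - 1 / r) * Bloc p r ω σ (Q ×ˢ P)

/-- The multi-parameter `r`-bump characteristic `A_{pr}^{αβ}(ω,σ)`. -/
def Abump (n m : ℕ) (α β p r : ℝ) (ω σ : En n × En m → ℝ≥0∞) : ℝ≥0∞ :=
  ⨆ (cQ : En n) (a : ℝ) (_ : 0 < a) (cP : En m) (b : ℝ) (_ : 0 < b),
    Aloc n m α β p r ω σ (cube cQ a) (cube cP b)

/-- The bump characteristic restricted to eccentricity `|Q|^{1/n}/|P|^{1/m} = 2^{-ℓ}`,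
i.e. rectangles whose `Q`-side is `2^{-ℓ}` times the `P`-side. -/
def AbumpEcc (n m : ℕ) (α β p r : ℝ) (ω σ : En n × En m → ℝ≥0∞) (ℓ : ℤ) : ℝ≥0∞ :=
  ⨆ (cQ : En n) (a : ℝ) (_ : 0 < a) (cP : En m) (b : ℝ) (_ : 0 < b)
    (_ : a = (2:ℝ) ^ (-ℓ) * b),
    Aloc n m α β p r ω σ (cube cQ a) (cube cP b)

/-- Normalized (averaged) localized bump quantity `A_{qr}^{αβ}[R](ω,σ)`. -/
def AlocN (n m : ℕ) (α β q r : ℝ) (ω σ : En n × En m → ℝ≥0∞)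
    (Q : Set (En n)) (P : Set (En m)) : ℝ≥0∞ :=
  volume Q ^ (α / n) * volume P ^ (β / m) *
  ((volume (Q ×ˢ P))⁻¹ * ∫⁻ z in Q ×ˢ P, ω z ^ (q * r)) ^ (1 / (q * r)) *
  ((volume (Q ×ˢ P))⁻¹ * ∫⁻ z in Q ×ˢ P, (σ z)⁻¹ ^ (q * r / (q - 1))) ^ ((q - 1) / (q * r))

lemma volume_cube {n : ℕ} (c : En n) (h : ℝ) :
    volume (cube c h) = (ENNReal.ofReal (2*h))^n := by
  have : cube c h = (MeasurableEquiv.toLp 2 (Fin n → ℝ)).symm ⁻¹'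
      (Set.univ.pi fun i => Icc (c i - h) (c i + h)) := by
    ext x
    simp only [cube, mem_setOf_eq, mem_preimage, Set.mem_pi, mem_univ, forall_true_left, mem_Icc]
    refine forall_congr' fun i => ?_
    rw [abs_sub_le_iff]
    show _ ↔ c i - h ≤ x i ∧ x i ≤ c i + h
    constructor <;> (intro hx; constructor <;> linarith [hx.1, hx.2])
  rw [this, (EuclideanSpace.volume_preserving_symm_measurableEquiv_toLp (Fin n)).measure_preimage
    ((MeasurableSet.univ_pi fun i => measurableSet_Icc).nullMeasurableSet)]
  rw [volume_pi_pi]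
  have e : ∀ i : Fin n, c i + h - (c i - h) = 2*h := fun i => by ring
  simp only [Real.volume_Icc, e, Finset.prod_const, Finset.card_univ, Fintype.card_fin]

lemma hoelder_step {X : Type*} [MeasurableSpace X] (μ : Measure X) (g : X → ℝ≥0∞)
    (hg : AEMeasurable g μ) {r s : ℝ} (hr : 0 < r) (hrs : r < s) :
    ∫⁻ x, g x ∂μ ≤ (∫⁻ x, g x ^ (s/r) ∂μ) ^ (r/s) * μ univ ^ (1 - r/s) := by
  have hp1 : 1 < s / r := (one_lt_div hr).2 hrs
  have hpq : (s/r).HolderConjugate ((s/r)/(s/r-1)) := Real.HolderConjugate.conjExponent hp1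
  have h := ENNReal.lintegral_mul_le_Lp_mul_Lq μ hpq hg aemeasurable_const (g := fun _ => 1)
  simp only [Pi.mul_apply, mul_one, ENNReal.one_rpow, lintegral_const, one_mul] at h
  refine h.trans (le_of_eq ?_)
  have e1 : 1 / (s/r) = r/s := by field_simp
  have e2 : 1 / ((s/r)/(s/r-1)) = 1 - r/s := by
    rw [one_div_div]
    have hr0 : r ≠ 0 := hr.ne'
    have hs0 : s ≠ 0 := (hr.trans hrs).ne'
    field_simp
  rw [e1, e2]

lemma rpow_step {X : Type*} [MeasurableSpace X] (μ : Measure X) (g : X → ℝ≥0∞)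
    (hg : AEMeasurable g μ) {t r s : ℝ} (ht : 0 < t) (hr : 0 < r) (hrs : r < s) :
    (∫⁻ x, g x ^ t ∂μ) ^ (1/t) ≤
      (∫⁻ x, g x ^ (t*(s/r)) ∂μ) ^ (r/(t*s)) * μ univ ^ (1/t - r/(t*s)) := by
  have hs : 0 < s := hr.trans hrs
  have h := hoelder_step μ (fun x => g x ^ t) (hg.pow_const t) hr hrs
  simp only [← ENNReal.rpow_natCast, ← ENNReal.rpow_mul] at h
  have h' := ENNReal.rpow_le_rpow h (le_of_lt (by positivity : (0:ℝ) < 1/t))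
  refine h'.trans (le_of_eq ?_)
  rw [ENNReal.mul_rpow_of_nonneg _ _ (by positivity : (0:ℝ) ≤ 1/t),
      ← ENNReal.rpow_mul, ← ENNReal.rpow_mul]
  congr 1
  · congr 1
    rw [mul_comm (r/s)]; rw [div_mul_div_comm, one_mul, mul_comm t s]
  · congr 1
    rw [mul_one_div, sub_div, div_div, mul_comm s t, one_div t]

set_option maxHeartbeats 2000000 in
/-- Reverse bump comparison: from the ratio bounds on `ω` (at exponent `ps`, with
`μ_ω`) and on `σ⁻¹` (at exponent `pr/(p-1)`, with `λ_σ`), together with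
`λ_ω + λ_σ ≥ 1` and `α ≤ n/r`, one gets
`A_{pr}^{αβ}[Q^ℓ × P] ≤ C' 2^{ℓγ_ω} A_{ps}^{αβ}[Q × P]` with
`γ_ω = (μ_ω-λ_ω)(α-n/r) + n(1/r-1/s)(μ_ω-1/p)`. -/
theorem stmt15 (n m : ℕ) (hn : 0 < n) (hm : 0 < m) (α β p r s : ℝ)
    (hp : 1 < p) (hr : 1 < r) (hrs : r < s) (hα0 : 0 < α) (hαr : α ≤ n / r)
    (hβ0 : 0 < β) (hβm : β < m)
    (ω σ : En n × En m → ℝ≥0∞) (hω : Measurable ω) (hσ : Measurable σ)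
    (C : ℝ≥0∞) (hC0 : 0 < C) (hC : C ≠ ⊤) :
    ∃ C' : ℝ≥0∞, C' ≠ ⊤ ∧
      ∀ (cQ : En n) (a : ℝ) (_ : 0 < a) (cP : En m) (b : ℝ) (_ : 0 < b)
        (ℓ : ℤ) (_ : 0 < ℓ) (lω lσ μω : ℝ)
        (_ : lω ∈ Icc (0:ℝ) 1) (_ : lσ ∈ Icc (0:ℝ) 1) (_ : μω ∈ Icc (0:ℝ) 1)
        (_ : 1 ≤ lω + lσ),
        ((∫⁻ z in cube cQ ((2:ℝ) ^ (-ℓ) * a) ×ˢ cube cP b, ω z ^ (p * s)) ^ (1 / (p * s)) ≤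
          C * (2:ℝ≥0∞) ^ ((ℓ:ℝ) * (α - n / s) * μω) *
            (∫⁻ z in cube cQ a ×ˢ cube cP b, ω z ^ (p * s)) ^ (1 / (p * s))) →
        ((∫⁻ z in cube cQ ((2:ℝ) ^ (-ℓ) * a) ×ˢ cube cP b,
              (σ z)⁻¹ ^ (p * r / (p - 1))) ^ ((p - 1) / (p * r)) ≤
          C * (2:ℝ≥0∞) ^ ((ℓ:ℝ) * (α - n / r) * lσ) *
            (∫⁻ z in cube cQ a ×ˢ cube cP b,
              (σ z)⁻¹ ^ (p * r / (p - 1))) ^ ((p - 1) / (p * r))) →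
        Aloc n m α β p r ω σ (cube cQ ((2:ℝ) ^ (-ℓ) * a)) (cube cP b) ≤
          C' * (2:ℝ≥0∞) ^ ((ℓ:ℝ) *
              ((μω - lω) * (α - n / r) + n * (1 / r - 1 / s) * (μω - 1 / p))) *
            Aloc n m α β p s ω σ (cube cQ a) (cube cP b) := by
  have hp0 : (0:ℝ) < p := lt_trans one_pos hp
  have hr0 : (0:ℝ) < r := lt_trans one_pos hr
  have hs0 : (0:ℝ) < s := hr0.trans hrs
  have hp1 : (0:ℝ) < p - 1 := by linarith
  have hn' : (0:ℝ) < n := by exact_mod_cast hn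
  have hm' : (0:ℝ) < m := by exact_mod_cast hm
  have hpne : p ≠ 0 := hp0.ne'
  have hrne : r ≠ 0 := hr0.ne'
  have hsne : s ≠ 0 := hs0.ne'
  have hp1ne : p - 1 ≠ 0 := hp1.ne'
  have hnne : (n:ℝ) ≠ 0 := hn'.ne'
  have h2ne0 : ∀ y : ℝ, (2:ℝ≥0∞) ^ y ≠ 0 := fun y => by
    simp [ENNReal.rpow_eq_zero_iff]
  have h2net : ∀ y : ℝ, (2:ℝ≥0∞) ^ y ≠ ⊤ := fun y => by
    simp [ENNReal.rpow_eq_top_iff]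
  have h2add : ∀ x y : ℝ, (2:ℝ≥0∞) ^ x * (2:ℝ≥0∞) ^ y = (2:ℝ≥0∞) ^ (x + y) := fun x y =>
    (ENNReal.rpow_add x y two_ne_zero ENNReal.ofNat_ne_top).symm
  refine ⟨C * C, ENNReal.mul_ne_top hC hC, ?_⟩
  intro cQ a ha cP b hb ℓ hℓ lω lσ μω hlω hlσ hμω hsum h1 h2
  have hℓ' : (0:ℝ) < (ℓ:ℝ) := by exact_mod_cast hℓ
  set Qℓ := cube cQ ((2:ℝ) ^ (-ℓ) * a) with hQℓdef
  set Q := cube cQ a with hQdef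
  set P := cube cP b with hPdef
  have h2ℓpos : (0:ℝ) < (2:ℝ) ^ (-ℓ) := zpow_pos two_pos _
  have hV : volume Q = (ENNReal.ofReal (2*a))^n := volume_cube _ _
  have hW : volume P = (ENNReal.ofReal (2*b))^m := volume_cube _ _
  have hV0 : volume Q ≠ 0 := by
    rw [hV]; exact pow_ne_zero _ (by simp only [ne_eq, ENNReal.ofReal_eq_zero, not_le]; linarith)
  have hVt : volume Q ≠ ⊤ := by rw [hV]; exact ENNReal.pow_ne_top ENNReal.ofReal_ne_top
  have hW0 : volume P ≠ 0 := by
    rw [hW]; exact pow_ne_zero _ (by simp only [ne_eq, ENNReal.ofReal_eq_zero, not_le]; linarith)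
  have hWt : volume P ≠ ⊤ := by rw [hW]; exact ENNReal.pow_ne_top ENNReal.ofReal_ne_top
  have hVadd : ∀ x y : ℝ, volume Q ^ x * volume Q ^ y = volume Q ^ (x + y) := fun x y =>
    (ENNReal.rpow_add x y hV0 hVt).symm
  have hWadd : ∀ x y : ℝ, volume P ^ x * volume P ^ y = volume P ^ (x + y) := fun x y =>
    (ENNReal.rpow_add x y hW0 hWt).symm
  have hVℓ : volume Qℓ = (2:ℝ≥0∞) ^ (-(ℓ:ℝ)*(n:ℝ)) * volume Q := by
    rw [hQℓdef, volume_cube, hV]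
    rw [show (2:ℝ) * ((2:ℝ) ^ (-ℓ) * a) = (2:ℝ) ^ (-ℓ) * (2*a) by ring,
      ENNReal.ofReal_mul h2ℓpos.le, mul_pow]
    congr 1
    rw [← Real.rpow_intCast 2 (-ℓ), ← ENNReal.ofReal_rpow_of_pos two_pos]
    rw [show ENNReal.ofReal 2 = 2 by norm_num]
    rw [← ENNReal.rpow_natCast ((2:ℝ≥0∞) ^ (((-ℓ:ℤ):ℝ))) n, ← ENNReal.rpow_mul]
    congr 1
    push_cast
    ring
  have hVℓ0 : volume Qℓ ≠ 0 := by
    rw [hVℓ]; exact mul_ne_zero (h2ne0 _) hV0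
  have hVℓt : volume Qℓ ≠ ⊤ := by
    rw [hVℓ]; exact ENNReal.mul_ne_top (h2net _) hVt
  have hVℓrpow : ∀ x : ℝ, volume Qℓ ^ x = (2:ℝ≥0∞) ^ (-(ℓ:ℝ)*(n:ℝ)*x) * volume Q ^ x := by
    intro x
    rw [hVℓ, ENNReal.mul_rpow_of_ne_zero (h2ne0 _) hV0, ← ENNReal.rpow_mul]
  have hRℓvol : volume (Qℓ ×ˢ P) = volume Qℓ * volume P := by
    rw [Measure.volume_eq_prod, Measure.prod_prod]
  have hRvol : volume (Q ×ˢ P) = volume Q * volume P := by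
    rw [Measure.volume_eq_prod, Measure.prod_prod]
  -- ω estimate
  have hprpos : (0:ℝ) < p * r := by positivity
  have hθω := rpow_step (volume.restrict (Qℓ ×ˢ P)) ω hω.aemeasurable hprpos hr0 hrs
  rw [Measure.restrict_apply_univ, hRℓvol,
    show p*r*(s/r) = p*s by field_simp,
    show r/(p*r*s) = 1/(p*s) by field_simp] at hθω
  have hX : (∫⁻ z in Qℓ ×ˢ P, ω z ^ (p*r)) ^ (1/(p*r)) ≤
      (C * (2:ℝ≥0∞) ^ ((ℓ:ℝ) * (α - n / s) * μω) *
        (∫⁻ z in Q ×ˢ P, ω z ^ (p * s)) ^ (1 / (p * s))) *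
      (volume Qℓ * volume P) ^ (1/(p*r) - 1/(p*s)) :=
    hθω.trans (mul_le_mul_left h1 _)
  -- σ estimate
  have htpos : (0:ℝ) < p * r / (p - 1) := by positivity
  have hθσ := rpow_step (volume.restrict (Q ×ˢ P)) (fun z => (σ z)⁻¹)
    hσ.aemeasurable.inv htpos hr0 hrs
  simp only [Measure.restrict_apply_univ] at hθσ
  rw [hRvol,
    show p*r/(p-1)*(s/r) = p*s/(p-1) by field_simp,
    show 1/(p*r/(p-1)) = (p-1)/(p*r) by field_simp,
    show r/(p*r/(p-1)*s) = (p-1)/(p*s) by field_simp] at hθσ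
  have hY : (∫⁻ z in Qℓ ×ˢ P, (σ z)⁻¹ ^ (p*r/(p-1))) ^ ((p-1)/(p*r)) ≤
      (C * (2:ℝ≥0∞) ^ ((ℓ:ℝ) * (α - n / r) * lσ)) *
      ((∫⁻ z in Q ×ˢ P, (σ z)⁻¹ ^ (p*s/(p-1))) ^ ((p-1)/(p*s)) *
        (volume Q * volume P) ^ ((p-1)/(p*r) - (p-1)/(p*s))) := by
    exact h2.trans (mul_le_mul_right hθσ _)
  -- put together
  simp only [Aloc, Bloc]
  set A := (∫⁻ z in Q ×ˢ P, ω z ^ (p * s)) ^ (1 / (p * s)) with hA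
  set B := (∫⁻ z in Q ×ˢ P, (σ z)⁻¹ ^ (p*s/(p-1))) ^ ((p-1)/(p*s)) with hB
  set th1 : ℝ := 1/(p*r) - 1/(p*s) with hth1
  set th2 : ℝ := (p-1)/(p*r) - (p-1)/(p*s) with hth2
  set e1 : ℝ := (ℓ:ℝ) * (α - n / s) * μω with he1
  set e2 : ℝ := (ℓ:ℝ) * (α - n / r) * lσ with he2
  set γ : ℝ := (ℓ:ℝ) * ((μω - lω) * (α - n / r) + n * (1 / r - 1 / s) * (μω - 1 / p)) with hγ
  have key : volume Qℓ ^ (α/(n:ℝ) - 1/r) * volume P ^ (β/(m:ℝ) - 1/r) * (C * C) *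
        (2:ℝ≥0∞) ^ e1 * (2:ℝ≥0∞) ^ e2 * (volume Qℓ * volume P) ^ th1 *
        (volume Q * volume P) ^ th2 ≤
      C * C * (2:ℝ≥0∞) ^ γ *
        (volume Q ^ (α/(n:ℝ) - 1/s) * volume P ^ (β/(m:ℝ) - 1/s)) := by
    rw [ENNReal.mul_rpow_of_ne_top hVℓt hWt, ENNReal.mul_rpow_of_ne_top hVt hWt,
      hVℓrpow, hVℓrpow]
    calc (2:ℝ≥0∞) ^ (-(ℓ:ℝ)*(n:ℝ)*(α/(n:ℝ) - 1/r)) * volume Q ^ (α/(n:ℝ) - 1/r) *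
          volume P ^ (β/(m:ℝ) - 1/r) * (C * C) * (2:ℝ≥0∞) ^ e1 * (2:ℝ≥0∞) ^ e2 *
          ((2:ℝ≥0∞) ^ (-(ℓ:ℝ)*(n:ℝ)*th1) * volume Q ^ th1 * volume P ^ th1) *
          (volume Q ^ th2 * volume P ^ th2)
        = C * C * ((2:ℝ≥0∞) ^ (-(ℓ:ℝ)*(n:ℝ)*(α/(n:ℝ) - 1/r)) * (2:ℝ≥0∞) ^ e1 *
            (2:ℝ≥0∞) ^ e2 * (2:ℝ≥0∞) ^ (-(ℓ:ℝ)*(n:ℝ)*th1)) *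
          ((volume Q ^ (α/(n:ℝ) - 1/r) * volume Q ^ th1 * volume Q ^ th2) *
            (volume P ^ (β/(m:ℝ) - 1/r) * volume P ^ th1 * volume P ^ th2)) := by ring
      _ = C * C * (2:ℝ≥0∞) ^ (-(ℓ:ℝ)*(n:ℝ)*(α/(n:ℝ) - 1/r) + e1 + e2 + -(ℓ:ℝ)*(n:ℝ)*th1) *
          (volume Q ^ (α/(n:ℝ) - 1/r + th1 + th2) *
            volume P ^ (β/(m:ℝ) - 1/r + th1 + th2)) := by
          rw [h2add, h2add, h2add, hVadd, hVadd, hWadd, hWadd]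
      _ ≤ C * C * (2:ℝ≥0∞) ^ γ *
          (volume Q ^ (α/(n:ℝ) - 1/s) * volume P ^ (β/(m:ℝ) - 1/s)) := by
          rw [show α/(n:ℝ) - 1/r + th1 + th2 = α/(n:ℝ) - 1/s by
              rw [hth1, hth2]; field_simp; ring,
            show β/(m:ℝ) - 1/r + th1 + th2 = β/(m:ℝ) - 1/s by
              rw [hth1, hth2]; field_simp; ring]
          refine mul_le_mul_left (mul_le_mul_right ?_ _) _
          refine ENNReal.rpow_le_rpow_of_exponent_le one_le_two ?_
          rw [he1, he2, hγ, hth1]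
          have hfact : 0 ≤ (ℓ:ℝ) * (((n:ℝ)/r - α) * (lω + lσ - 1)) :=
            mul_nonneg hℓ'.le (mul_nonneg (by linarith) (by linarith))
          have hid : (ℓ:ℝ) * ((μω - lω) * (α - n / r) + n * (1 / r - 1 / s) * (μω - 1 / p)) -
              (-(ℓ:ℝ)*(n:ℝ)*(α/(n:ℝ) - 1/r) + (ℓ:ℝ) * (α - n / s) * μω +
                (ℓ:ℝ) * (α - n / r) * lσ + -(ℓ:ℝ)*(n:ℝ)*(1/(p*r) - 1/(p*s))) =
              (ℓ:ℝ) * (((n:ℝ)/r - α) * (lω + lσ - 1)) := by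
            field_simp
            ring
          linarith
  calc volume Qℓ ^ (α/(n:ℝ) - 1/r) * volume P ^ (β/(m:ℝ) - 1/r) *
        ((∫⁻ z in Qℓ ×ˢ P, ω z ^ (p*r)) ^ (1/(p*r)) *
          (∫⁻ z in Qℓ ×ˢ P, (σ z)⁻¹ ^ (p*r/(p-1))) ^ ((p-1)/(p*r)))
      ≤ volume Qℓ ^ (α/(n:ℝ) - 1/r) * volume P ^ (β/(m:ℝ) - 1/r) *
        (((C * (2:ℝ≥0∞) ^ e1 * A) * (volume Qℓ * volume P) ^ th1) *
          ((C * (2:ℝ≥0∞) ^ e2) * (B * (volume Q * volume P) ^ th2))) :=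
        mul_le_mul_right (mul_le_mul' hX hY) _
    _ = volume Qℓ ^ (α/(n:ℝ) - 1/r) * volume P ^ (β/(m:ℝ) - 1/r) * (C * C) *
          (2:ℝ≥0∞) ^ e1 * (2:ℝ≥0∞) ^ e2 * (volume Qℓ * volume P) ^ th1 *
          (volume Q * volume P) ^ th2 * (A * B) := by ring
    _ ≤ C * C * (2:ℝ≥0∞) ^ γ *
          (volume Q ^ (α/(n:ℝ) - 1/s) * volume P ^ (β/(m:ℝ) - 1/s)) * (A * B) :=
        mul_le_mul_left key _
    _ = C * C * (2:ℝ≥0∞) ^ γ *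
          (volume Q ^ (α/(n:ℝ) - 1/s) * volume P ^ (β/(m:ℝ) - 1/s) * (A * B)) := by ring
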